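/- With J_n as in the class 𝒥_n (corner-bordered complex Jacobi matrix) and J_{n−1} its leading principal submatrix with simple eigenvalues μ_k and orthonormal eigenvectors u_k, the Schur complement identity χ_n(λ)/χ_{n−1}(λ) = λ − a_n − Σ_{k=1}^{n−1} |b_n u_{k,1} + conj(b_{n−1}) u_{k,n−1}|² / (λ − μ_k) holds for all λ not an eigenvalue of J_{n−1}. -/

import Mathlib

open Polynomial Matrix Finset

noncomputable section

/-- The corner-bordered complex Jacobi matrix of the class `𝒥_n`: real diagonal
entries `c 0, …, c (n−2)`, complex entry `a` at position `(n−1, n−1)`, superdiagonal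
entries `b 0, …, b (n−2)` with their conjugates on the subdiagonal, and corner entries
`conj (b (n−1))` at `(0, n−1)` and `b (n−1)` at `(n−1, 0)`. -/
def cornerJacobi (n : ℕ) (c : ℕ → ℝ) (b : ℕ → ℂ) (a : ℂ) :
    Matrix (Fin n) (Fin n) ℂ :=
  Matrix.of fun i j =>
    if (i : ℕ) = (j : ℕ) then (if (i : ℕ) = n - 1 then a else ((c (i : ℕ) : ℝ) : ℂ))
    else if (i : ℕ) = 0 ∧ (j : ℕ) = n - 1 then (starRingEnd ℂ) (b (n - 1))
    else if (i : ℕ) = n - 1 ∧ (j : ℕ) = 0 then b (n - 1)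
    else if (i : ℕ) + 1 = (j : ℕ) then b (i : ℕ)
    else if (j : ℕ) + 1 = (i : ℕ) then (starRingEnd ℂ) (b (j : ℕ))
    else 0

/-- The leading principal `(n−1)×(n−1)` submatrix of `cornerJacobi n c b a`. -/
def cornerJacobiSub (n : ℕ) (c : ℕ → ℝ) (b : ℕ → ℂ) (a : ℂ) :
    Matrix (Fin (n - 1)) (Fin (n - 1)) ℂ :=
  (cornerJacobi n c b a).submatrix (Fin.castLE (Nat.sub_le n 1)) (Fin.castLE (Nat.sub_le n 1))

/-- the Schur complement identity
`χ_n(λ)/χ_{n−1}(λ) = λ − a_n − Σ_k |b_n u_{k,1} + conj(b_{n−1}) u_{k,n−1}|²/(λ − μ_k)`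
for all `λ` not an eigenvalue of the leading submatrix `J_{n−1}`. -/

lemma my_eval_charpoly {m : Type*} [Fintype m] [DecidableEq m]
    (M : Matrix m m ℂ) (x : ℂ) :
    M.charpoly.eval x = (x • (1 : Matrix m m ℂ) - M).det := by
  rw [Matrix.charpoly, ← coe_evalRingHom, RingHom.map_det]
  congr 1
  ext i j
  by_cases h : i = j <;>
    simp [Matrix.charmatrix_apply, Matrix.diagonal_apply, h, Matrix.one_apply,
      Matrix.sub_apply, Matrix.smul_apply]

lemma aux_schur {m : ℕ} (A : Matrix (Fin m) (Fin m) ℂ) (v w : Fin m → ℂ) (d lam : ℂ)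
    (μ : Fin m → ℝ) (u : Fin m → Fin m → ℂ)
    (heig : ∀ k, A.mulVec (u k) = ((μ k : ℂ)) • u k)
    (horth : ∀ j k, star (u j) ⬝ᵥ u k = if j = k then (1 : ℂ) else 0)
    (hlam : ∀ k, lam ≠ (μ k : ℂ)) :
    (Matrix.fromBlocks (lam • 1 - A) (Matrix.of fun i (_ : Fin 1) => -v i)
        (Matrix.of fun (_ : Fin 1) j => -w j) (Matrix.of fun _ _ => lam - d)).det
      = (lam • (1 : Matrix (Fin m) (Fin m) ℂ) - A).det *
        (lam - d - ∑ k, (w ⬝ᵥ u k) * (star (u k) ⬝ᵥ v) / (lam - (μ k : ℂ))) := by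
  set M := lam • (1 : Matrix (Fin m) (Fin m) ℂ) - A with hM
  have hne : ∀ k, lam - (μ k : ℂ) ≠ 0 := fun k => sub_ne_zero.mpr (hlam k)
  -- completeness of the eigenvectors
  have hcomp : ∑ k, vecMulVec (u k) (star (u k)) = (1 : Matrix (Fin m) (Fin m) ℂ) := by
    let U : Matrix (Fin m) (Fin m) ℂ := Matrix.of fun i k => u k i
    have hU : Uᴴ * U = 1 := by
      ext j k
      simpa [Matrix.mul_apply, Matrix.conjTranspose_apply, U, Matrix.one_apply,
        dotProduct] using horth j k
    have hU' : U * Uᴴ = 1 := mul_eq_one_comm.mp hU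
    ext i j
    calc (∑ k, vecMulVec (u k) (star (u k))) i j
        = (U * Uᴴ) i j := by
          simp [Matrix.sum_apply, vecMulVec_apply, Matrix.mul_apply,
            Matrix.conjTranspose_apply, U]
      _ = (1 : Matrix (Fin m) (Fin m) ℂ) i j := by rw [hU']
  have hMu : ∀ k, M.mulVec (u k) = (lam - (μ k : ℂ)) • u k := by
    intro k
    simp [hM, Matrix.sub_mulVec, Matrix.smul_mulVec, Matrix.one_mulVec, heig k, sub_smul]
  set N := ∑ k, (lam - (μ k : ℂ))⁻¹ • vecMulVec (u k) (star (u k)) with hN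
  have hMN : M * N = 1 := by
    rw [hN, Finset.mul_sum]
    have hterm : ∀ k, M * ((lam - (μ k : ℂ))⁻¹ • vecMulVec (u k) (star (u k)))
        = vecMulVec (u k) (star (u k)) := by
      intro k
      have h1 : M * vecMulVec (u k) (star (u k)) = vecMulVec (M.mulVec (u k)) (star (u k)) := by
        ext i j
        simp [Matrix.mul_apply, vecMulVec_apply, Matrix.mulVec, dotProduct,
          Finset.sum_mul, mul_assoc]
      rw [Matrix.mul_smul, h1, hMu k]
      ext i j
      simp only [Matrix.smul_apply, vecMulVec_apply, Pi.smul_apply, smul_eq_mul]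
      field_simp [hne k]
    simp_rw [hterm]
    exact hcomp
  have hNM : N * M = 1 := mul_eq_one_comm.mp hMN
  haveI : Invertible M := ⟨N, hNM, hMN⟩
  have hinv : ⅟M = N := invOf_eq_right_inv hMN
  rw [Matrix.det_fromBlocks₁₁]
  congr 1
  rw [Matrix.det_fin_one]
  have hCNB : ((Matrix.of fun (_ : Fin 1) j => -w j) * N * (Matrix.of fun i (_ : Fin 1) => -v i)) 0 0
      = ∑ k, (w ⬝ᵥ u k) * (star (u k) ⬝ᵥ v) / (lam - (μ k : ℂ)) := by
    simp only [Matrix.mul_apply, hN, Matrix.sum_apply, Matrix.smul_apply, vecMulVec_apply,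
      Matrix.of_apply, smul_eq_mul]
    simp only [Finset.mul_sum, Finset.sum_mul, neg_mul, mul_neg, neg_neg, dotProduct,
      Pi.star_apply, RCLike.star_def, div_eq_mul_inv, Finset.sum_neg_distrib]
    rw [Finset.sum_congr rfl (fun x _ => Finset.sum_comm), Finset.sum_comm]
    refine Finset.sum_congr rfl fun k _ => ?_
    refine Finset.sum_congr rfl fun i _ => ?_
    refine Finset.sum_congr rfl fun l _ => ?_
    ring
  rw [hinv, Matrix.sub_apply, hCNB, Matrix.of_apply]

theorem stmt8 (n : ℕ) (hn : 3 ≤ n) (c : ℕ → ℝ) (b : ℕ → ℂ) (a : ℂ)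
    (hb : ∀ k : ℕ, k < n → b k ≠ 0)
    (μ : Fin (n - 1) → ℝ) (hμ : StrictMono μ)
    (u : Fin (n - 1) → (Fin (n - 1) → ℂ))
    (heig : ∀ k, (cornerJacobiSub n c b a).mulVec (u k) = ((μ k : ℂ)) • u k)
    (horth : ∀ j k, star (u j) ⬝ᵥ u k = if j = k then (1 : ℂ) else 0)
    (hchar : (cornerJacobiSub n c b a).charpoly = ∏ j, (X - C ((μ j : ℂ)))) :
    ∀ lam : ℂ, (∀ k, lam ≠ (μ k : ℂ)) →
      ((cornerJacobi n c b a).charpoly.eval lam)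
          / ((cornerJacobiSub n c b a).charpoly.eval lam)
        = lam - a - ∑ k : Fin (n - 1),
            ((‖b (n - 1) * u k ⟨0, by omega⟩
                + (starRingEnd ℂ) (b (n - 2)) * u k ⟨n - 2, by omega⟩‖ ^ 2 : ℝ) : ℂ)
              / (lam - (μ k : ℂ)) := by
  intro lam hlam
  have h0lt : 0 < n - 1 := by omega
  have h2lt : n - 2 < n - 1 := by omega
  set w : Fin (n-1) → ℂ := fun i =>
    if (i:ℕ) = 0 then b (n-1) else if (i:ℕ) = n-2 then (starRingEnd ℂ) (b (n-2)) else 0 with hw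
  set v : Fin (n-1) → ℂ := fun i =>
    if (i:ℕ) = 0 then (starRingEnd ℂ) (b (n-1)) else if (i:ℕ) = n-2 then b (n-2) else 0 with hv
  set J := cornerJacobi n c b a with hJdef
  set A := cornerJacobiSub n c b a with hAdef
  have hA : ∀ i j : Fin (n-1),
      A i j = J (Fin.castLE (Nat.sub_le n 1) i) (Fin.castLE (Nat.sub_le n 1) j) := fun i j => rfl
  let e : Fin (n-1) ⊕ Fin 1 ≃ Fin n := finSumFinEquiv.trans (finCongr (by omega))
  have heL : ∀ i : Fin (n-1), (e (Sum.inl i) : ℕ) = (i:ℕ) := by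
    intro i; simp [e]
  have heR : ∀ i : Fin 1, (e (Sum.inr i) : ℕ) = n - 1 := by
    intro i
    simp [e, Fin.val_eq_zero i]
  have hblock : (lam • (1 : Matrix (Fin n) (Fin n) ℂ) - J).submatrix e e
      = fromBlocks (lam • 1 - A) (Matrix.of fun i (_ : Fin 1) => -v i)
          (Matrix.of fun (_ : Fin 1) j => -w j) (Matrix.of fun _ _ => lam - a) := by
    ext i j
    rcases i with i | i <;> rcases j with j | j
    · have hx : e (Sum.inl i) = Fin.castLE (Nat.sub_le n 1) i := Fin.ext (heL i)
      have hy : e (Sum.inl j) = Fin.castLE (Nat.sub_le n 1) j := Fin.ext (heL j)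
      simp only [Matrix.submatrix_apply, fromBlocks_apply₁₁, Matrix.sub_apply,
        Matrix.smul_apply, Matrix.one_apply, hx, hy, smul_eq_mul, hA]
      congr 1
      simp [Fin.ext_iff]
    · -- column block
      have hxy : e (Sum.inl i) ≠ e (Sum.inr j) := by
        intro h
        have := congrArg (Fin.val) h
        rw [heL i, heR j] at this
        omega
      simp only [Matrix.submatrix_apply, fromBlocks_apply₁₂, Matrix.sub_apply,
        Matrix.smul_apply, Matrix.one_apply, if_neg hxy, smul_eq_mul, mul_zero, zero_sub,
        Matrix.of_apply, neg_inj]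
      rw [hJdef]
      show cornerJacobi n c b a (e (Sum.inl i)) (e (Sum.inr j)) = v i
      simp only [cornerJacobi, Matrix.of_apply, heL i, heR j, hv]
      have hi : (i:ℕ) < n - 1 := i.isLt
      by_cases g0 : (i:ℕ) = 0
      · rw [if_neg (by omega), if_pos ⟨g0, trivial⟩, if_pos g0]
      · by_cases g2 : (i:ℕ) = n - 2
        · rw [if_neg (by omega), if_neg (fun h => g0 h.1), if_neg (by omega),
            if_pos (show (i:ℕ) + 1 = n - 1 by omega), if_neg g0, if_pos g2, g2]
        · rw [if_neg (by omega), if_neg (fun h => g0 h.1), if_neg (by omega),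
            if_neg (by omega), if_neg (by omega), if_neg g0, if_neg g2]
    · -- row block
      have hxy : e (Sum.inr i) ≠ e (Sum.inl j) := by
        intro h
        have := congrArg (Fin.val) h
        rw [heL j, heR i] at this
        omega
      simp only [Matrix.submatrix_apply, fromBlocks_apply₂₁, Matrix.sub_apply,
        Matrix.smul_apply, Matrix.one_apply, if_neg hxy, smul_eq_mul, mul_zero, zero_sub,
        Matrix.of_apply, neg_inj]
      rw [hJdef]
      show cornerJacobi n c b a (e (Sum.inr i)) (e (Sum.inl j)) = w j
      simp only [cornerJacobi, Matrix.of_apply, heL j, heR i, hw]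
      have hj : (j:ℕ) < n - 1 := j.isLt
      by_cases g0 : (j:ℕ) = 0
      · rw [if_neg (by omega), if_neg (by omega), if_pos ⟨trivial, g0⟩, if_pos g0]
      · by_cases g2 : (j:ℕ) = n - 2
        · rw [if_neg (by omega), if_neg (by omega), if_neg (fun h => g0 h.2), if_neg (by omega),
            if_pos (show (j:ℕ) + 1 = n - 1 by omega), if_neg g0, if_pos g2, g2]
        · rw [if_neg (by omega), if_neg (by omega), if_neg (fun h => g0 h.2), if_neg (by omega),
            if_neg (by omega), if_neg g0, if_neg g2]
    · have hxy : e (Sum.inr i) = e (Sum.inr j) := by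
        apply Fin.ext; rw [heR i, heR j]
      simp only [Matrix.submatrix_apply, fromBlocks_apply₂₂, Matrix.sub_apply,
        Matrix.smul_apply, Matrix.one_apply, if_pos hxy, smul_eq_mul, mul_one,
        Matrix.of_apply]
      congr 1
      rw [hJdef]
      simp only [cornerJacobi, Matrix.of_apply, heR i, heR j]
      simp
  have hdetA : (lam • (1 : Matrix (Fin (n-1)) (Fin (n-1)) ℂ) - A).det
      = ∏ j, (lam - (μ j : ℂ)) := by
    rw [← my_eval_charpoly, hchar]
    simp [eval_prod]
  have hprodne : (∏ j, (lam - (μ j : ℂ))) ≠ 0 :=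
    Finset.prod_ne_zero_iff.mpr fun j _ => sub_ne_zero.mpr (hlam j)
  have hJeval : J.charpoly.eval lam
      = (∏ j, (lam - (μ j : ℂ))) *
        (lam - a - ∑ k, (w ⬝ᵥ u k) * (star (u k) ⬝ᵥ v) / (lam - (μ k : ℂ))) := by
    rw [my_eval_charpoly, ← Matrix.det_submatrix_equiv_self e, hblock,
      aux_schur A v w a lam μ u heig horth hlam, hdetA]
  have hvw : ∀ i, v i = (starRingEnd ℂ) (w i) := by
    intro i
    simp only [hv, hw]
    split_ifs <;> simp
  have hwk : ∀ k, w ⬝ᵥ u k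
      = b (n-1) * u k ⟨0, h0lt⟩ + (starRingEnd ℂ) (b (n-2)) * u k ⟨n-2, h2lt⟩ := by
    intro k
    have key : ∀ i : Fin (n-1), w i * u k i
        = (if i = (⟨0, h0lt⟩ : Fin (n-1)) then b (n-1) * u k ⟨0, h0lt⟩ else 0)
          + (if i = (⟨n-2, h2lt⟩ : Fin (n-1)) then (starRingEnd ℂ) (b (n-2)) * u k ⟨n-2, h2lt⟩ else 0) := by
      intro i
      simp only [hw]
      by_cases g0 : (i:ℕ) = 0
      · have hi : i = ⟨0, h0lt⟩ := Fin.ext g0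
        subst hi
        simp [show ¬ ((0:ℕ) = n - 2) by omega, Fin.ext_iff, show ¬ ((0:ℕ) = n - 2) by omega]
      · by_cases g2 : (i:ℕ) = n-2
        · have hi : i = ⟨n-2, h2lt⟩ := Fin.ext g2
          subst hi
          simp [show ¬ ((n-2:ℕ) = 0) by omega, Fin.ext_iff]
        · simp [g0, g2, Fin.ext_iff]
    rw [dotProduct, Finset.sum_congr rfl fun i _ => key i, Finset.sum_add_distrib,
      Finset.sum_ite_eq' univ, Finset.sum_ite_eq' univ]
    simp
  have hvk : ∀ k, star (u k) ⬝ᵥ v = (starRingEnd ℂ) (w ⬝ᵥ u k) := by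
    intro k
    simp only [dotProduct, map_sum]
    refine Finset.sum_congr rfl fun i _ => ?_
    simp only [Pi.star_apply, hvw i, _root_.map_mul, RCLike.star_def]
    ring
  rw [hJeval]
  rw [show A.charpoly.eval lam = ∏ j, (lam - (μ j : ℂ)) by rw [hchar]; simp [eval_prod]]
  rw [mul_div_cancel_left₀ _ hprodne]
  congr 1
  refine Finset.sum_congr rfl fun k _ => ?_
  congr 1
  rw [hvk k, hwk k, Complex.mul_conj]
  simp [← Complex.sq_norm]
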